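/- Let $K$ be a field of characteristic $\neq 2$ and let $a, b, c$ be algebraically independent over $K$. Then $K[ab, bc, ca] \cap K[x - a^2, x - b^2, x - c^2] = K$, where $x$ is a further variable algebraically independent of $a, b, c$, and both subalgebras are taken inside $K[a, b, c, x]$. -/

import Mathlib

open MvPolynomial

/-- Applying an algebra hom to an `aeval` gives an `aeval` with transformed values. -/
private lemma comp_aeval_eq {K A B : Type*} [CommSemiring K] [CommSemiring A] [CommSemiring B]
    [Algebra K A] [Algebra K B] {m : ℕ} (φ : A →ₐ[K] B)
    (v : Fin m → A) (w : Fin m → B) (h : ∀ i, φ (v i) = w i)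
    (q : MvPolynomial (Fin m) K) : φ (MvPolynomial.aeval v q) = MvPolynomial.aeval w q := by
  rw [MvPolynomial.comp_aeval_apply]
  exact congrArg (fun u => MvPolynomial.aeval u q) (funext h)

private lemma expand_two_monomial {K : Type*} [CommSemiring K] {n : ℕ}
    (e : Fin n →₀ ℕ) (r : K) :
    expand 2 (monomial e r : MvPolynomial (Fin n) K) = monomial (2 • e) r := by
  rw [monomial_eq, monomial_eq, map_mul, expand_C,
    Finsupp.prod_fintype _ _ (fun i => pow_zero _),
    Finsupp.prod_fintype _ _ (fun i => pow_zero _), map_prod]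
  refine congrArg _ (Finset.prod_congr rfl fun i _ => ?_)
  rw [map_pow, expand_X, ← pow_mul, Finsupp.smul_apply, smul_eq_mul]

private lemma mv_expand_two_injective {K : Type*} [CommRing K] {n : ℕ} :
    Function.Injective (expand 2 : MvPolynomial (Fin n) K →ₐ[K] MvPolynomial (Fin n) K) := by
  have key : ∀ (f : MvPolynomial (Fin n) K) (d : Fin n →₀ ℕ),
      coeff (2 • d) (expand 2 f) = coeff d f := by
    intro f d
    induction f using MvPolynomial.induction_on' with
    | monomial e r =>
        rw [expand_two_monomial, coeff_monomial, coeff_monomial]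
        by_cases h : e = d
        · subst h; simp
        · rw [if_neg h, if_neg]
          intro hc
          apply h
          ext i
          have := DFunLike.congr_fun hc i
          simp only [Finsupp.smul_apply, smul_eq_mul] at this
          omega
    | add f g hf hg => simp [map_add, coeff_add, hf, hg]
  intro f g hfg
  ext d
  rw [← key f d, ← key g d, hfg]

open MvPolynomial in
/-- If `char K ≠ 2` then `K[ab, bc, ca] ∩ K[x − a², x − b², x − c²] = K`
inside `K[a, b, c, x]`.  Here `a = X 0`, `b = X 1`, `c = X 2`, `x = X 3`. -/
theorem stmt_15 (K : Type*) [Field K] (hchar : ringChar K ≠ 2) :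
    Algebra.adjoin K {(X 0 * X 1 : MvPolynomial (Fin 4) K), X 1 * X 2, X 2 * X 0} ⊓
      Algebra.adjoin K {(X 3 - X 0 ^ 2 : MvPolynomial (Fin 4) K),
        X 3 - X 1 ^ 2, X 3 - X 2 ^ 2} = ⊥ := by
  set R := MvPolynomial (Fin 4) K with hR
  have hset : ∀ x y z : R, ({x, y, z} : Set R) = Set.range ![x, y, z] := by
    intro x y z
    rw [Matrix.range_cons, Matrix.range_cons, Matrix.range_cons_empty,
      Set.singleton_union, Set.singleton_union]
  rw [hset, hset, Algebra.adjoin_range_eq_range_aeval, Algebra.adjoin_range_eq_range_aeval]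
  apply le_antisymm _ bot_le
  intro f hf
  rw [Algebra.mem_bot]
  obtain ⟨hA, hB⟩ := Algebra.mem_inf.mp hf
  obtain ⟨p, hp⟩ := (AlgHom.mem_range _).mp hA
  obtain ⟨q, hq⟩ := (AlgHom.mem_range _).mp hB
  -- star : plugging x := a² into the q-representation
  have hstar : aeval ![(0 : R), X 0 ^ 2 - X 1 ^ 2, X 0 ^ 2 - X 2 ^ 2] q = f := by
    have h1 : (aeval ![X 0, X 1, X 2, X 0 ^ 2] : R →ₐ[K] R)
        (aeval ![X 3 - X 0 ^ 2, X 3 - X 1 ^ 2, X 3 - X 2 ^ 2] q)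
        = aeval ![(0 : R), X 0 ^ 2 - X 1 ^ 2, X 0 ^ 2 - X 2 ^ 2] q := by
      apply comp_aeval_eq
      intro i; fin_cases i <;> simp <;> ring
    have h2 : (aeval ![X 0, X 1, X 2, X 0 ^ 2] : R →ₐ[K] R)
        (aeval ![X 0 * X 1, X 1 * X 2, X 2 * X 0] p)
        = aeval ![X 0 * X 1, X 1 * X 2, X 2 * X 0] p := by
      apply comp_aeval_eq
      intro i; fin_cases i <;> simp
    rw [← h1, hq, ← hp, h2, hp]
  -- eq1 : setting c := 0
  have heq1 : aeval ![(0 : R), X 0 ^ 2 - X 1 ^ 2, X 0 ^ 2] q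
      = aeval ![X 0 * X 1, (0 : R), 0] p := by
    have h1 : (aeval ![X 0, X 1, 0, X 3] : R →ₐ[K] R)
        (aeval ![(0 : R), X 0 ^ 2 - X 1 ^ 2, X 0 ^ 2 - X 2 ^ 2] q)
        = aeval ![(0 : R), X 0 ^ 2 - X 1 ^ 2, X 0 ^ 2] q := by
      apply comp_aeval_eq
      intro i; fin_cases i <;> simp
    have h2 : (aeval ![X 0, X 1, 0, X 3] : R →ₐ[K] R)
        (aeval ![X 0 * X 1, X 1 * X 2, X 2 * X 0] p)
        = aeval ![X 0 * X 1, (0 : R), 0] p := by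
      apply comp_aeval_eq
      intro i; fin_cases i <;> simp
    rw [← h1, hstar, ← hp, h2]
  -- eq3 : setting a := b := 0
  have heq3 : aeval ![(0 : R), 0, -(X 2 ^ 2)] q = algebraMap K R (constantCoeff p) := by
    have h1 : (aeval ![0, 0, X 2, X 3] : R →ₐ[K] R)
        (aeval ![(0 : R), X 0 ^ 2 - X 1 ^ 2, X 0 ^ 2 - X 2 ^ 2] q)
        = aeval ![(0 : R), 0, -(X 2 ^ 2)] q := by
      apply comp_aeval_eq
      intro i; fin_cases i <;> simp
    have h2 : (aeval ![0, 0, X 2, X 3] : R →ₐ[K] R)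
        (aeval ![X 0 * X 1, X 1 * X 2, X 2 * X 0] p)
        = aeval (fun _ => (0 : R)) p := by
      apply comp_aeval_eq
      intro i; fin_cases i <;> simp
    rw [← h1, hstar, ← hp, h2, aeval_zero']
  set K₂ := MvPolynomial (Fin 2) K
  set G' : K₂ := aeval ![(0 : K₂), X 0, X 1] q with hG'
  set g : K₂ := aeval ![X 0 - X 1, X 0] G' with hgdef
  -- f in terms of g
  have hfg : aeval ![X 0 ^ 2 - X 2 ^ 2, X 1 ^ 2 - X 2 ^ 2] g = f := by
    have h1 : (aeval ![X 0 ^ 2 - X 2 ^ 2, X 1 ^ 2 - X 2 ^ 2] : K₂ →ₐ[K] R) g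
        = aeval ![X 0 ^ 2 - X 1 ^ 2, X 0 ^ 2 - X 2 ^ 2] G' := by
      rw [hgdef]
      apply comp_aeval_eq
      intro i; fin_cases i <;> simp <;> ring
    have h2 : (aeval ![X 0 ^ 2 - X 1 ^ 2, X 0 ^ 2 - X 2 ^ 2] : K₂ →ₐ[K] R) G'
        = aeval ![(0 : R), X 0 ^ 2 - X 1 ^ 2, X 0 ^ 2 - X 2 ^ 2] q := by
      rw [hG']
      apply comp_aeval_eq
      intro i; fin_cases i <;> simp
    rw [h1, h2, hstar]
  -- F1 : the key identity for g on squares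
  have hF1 : (aeval ![X 0 ^ 2, X 1 ^ 2] : K₂ →ₐ[K] R) g = aeval ![X 0 * X 1, (0 : R), 0] p := by
    have h1 : (aeval ![X 0 ^ 2, X 1 ^ 2] : K₂ →ₐ[K] R) g
        = aeval ![X 0 ^ 2 - X 1 ^ 2, X 0 ^ 2] G' := by
      rw [hgdef]
      apply comp_aeval_eq
      intro i; fin_cases i <;> simp
    have h2 : (aeval ![X 0 ^ 2 - X 1 ^ 2, X 0 ^ 2] : K₂ →ₐ[K] R) G'
        = aeval ![(0 : R), X 0 ^ 2 - X 1 ^ 2, X 0 ^ 2] q := by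
      rw [hG']
      apply comp_aeval_eq
      intro i; fin_cases i <;> simp
    rw [h1, h2, heq1]
  -- E3 in terms of g
  have hE3 : (aeval ![-(X 2 ^ 2), -(X 2 ^ 2)] : K₂ →ₐ[K] R) g
      = algebraMap K R (constantCoeff p) := by
    have h1 : (aeval ![-(X 2 ^ 2), -(X 2 ^ 2)] : K₂ →ₐ[K] R) g
        = aeval ![(0 : R), -(X 2 ^ 2)] G' := by
      rw [hgdef]
      apply comp_aeval_eq
      intro i; fin_cases i <;> simp
    have h2 : (aeval ![(0 : R), -(X 2 ^ 2)] : K₂ →ₐ[K] R) G'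
        = aeval ![(0 : R), 0, -(X 2 ^ 2)] q := by
      rw [hG']
      apply comp_aeval_eq
      intro i; fin_cases i <;> simp
    rw [h1, h2, heq3]
  -- the diagonal trick : g(UW, V) = g(U, VW)
  have hG1 : (aeval ![X 0 ^ 2 * X 2 ^ 2, X 1 ^ 2] : K₂ →ₐ[K] R) g
      = (aeval ![X 0 ^ 2, X 1 ^ 2 * X 2 ^ 2] : K₂ →ₐ[K] R) g := by
    have h1 : (aeval ![X 0 * X 2, X 1, X 2, X 3] : R →ₐ[K] R)
        ((aeval ![X 0 ^ 2, X 1 ^ 2] : K₂ →ₐ[K] R) g)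
        = aeval ![X 0 ^ 2 * X 2 ^ 2, X 1 ^ 2] g := by
      apply comp_aeval_eq
      intro i; fin_cases i <;> simp <;> ring
    have h2 : (aeval ![X 0 * X 2, X 1, X 2, X 3] : R →ₐ[K] R)
        (aeval ![X 0 * X 1, (0 : R), 0] p)
        = aeval ![X 0 * X 1 * X 2, (0 : R), 0] p := by
      apply comp_aeval_eq
      intro i; fin_cases i <;> simp <;> ring
    have h3 : (aeval ![X 0, X 1 * X 2, X 2, X 3] : R →ₐ[K] R)
        ((aeval ![X 0 ^ 2, X 1 ^ 2] : K₂ →ₐ[K] R) g)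
        = aeval ![X 0 ^ 2, X 1 ^ 2 * X 2 ^ 2] g := by
      apply comp_aeval_eq
      intro i; fin_cases i <;> simp <;> ring
    have h4 : (aeval ![X 0, X 1 * X 2, X 2, X 3] : R →ₐ[K] R)
        (aeval ![X 0 * X 1, (0 : R), 0] p)
        = aeval ![X 0 * X 1 * X 2, (0 : R), 0] p := by
      apply comp_aeval_eq
      intro i; fin_cases i <;> simp <;> ring
    calc (aeval ![X 0 ^ 2 * X 2 ^ 2, X 1 ^ 2] : K₂ →ₐ[K] R) g
        = aeval ![X 0 * X 1 * X 2, (0 : R), 0] p := by rw [← h1, hF1, h2]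
      _ = (aeval ![X 0 ^ 2, X 1 ^ 2 * X 2 ^ 2] : K₂ →ₐ[K] R) g := by rw [← h4, ← hF1, h3]
  -- cancel the squares using injectivity of expand 2
  have hg12 : (aeval ![X 0 * X 2, X 1] : K₂ →ₐ[K] R) g
      = (aeval ![X 0, X 1 * X 2] : K₂ →ₐ[K] R) g := by
    apply mv_expand_two_injective (K := K) (n := 4)
    have h1 : (expand 2 : R →ₐ[K] R) ((aeval ![X 0 * X 2, X 1] : K₂ →ₐ[K] R) g)
        = aeval ![X 0 ^ 2 * X 2 ^ 2, X 1 ^ 2] g := by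
      apply comp_aeval_eq
      intro i; fin_cases i <;> simp <;> ring
    have h2 : (expand 2 : R →ₐ[K] R) ((aeval ![X 0, X 1 * X 2] : K₂ →ₐ[K] R) g)
        = aeval ![X 0 ^ 2, X 1 ^ 2 * X 2 ^ 2] g := by
      apply comp_aeval_eq
      intro i; fin_cases i <;> simp <;> ring
    rw [h1, h2, hG1]
  -- KEY : g(U,V) = g(UV, 1)
  have hKEY : aeval ![X 0 * X 1, (1 : K₂)] g = g := by
    have h1 : (aeval ![X 0, 1, X 1, 0] : R →ₐ[K] K₂)
        ((aeval ![X 0 * X 2, X 1] : K₂ →ₐ[K] R) g)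
        = aeval ![X 0 * X 1, (1 : K₂)] g := by
      apply comp_aeval_eq
      intro i; fin_cases i <;> simp
    have h2 : (aeval ![X 0, 1, X 1, 0] : R →ₐ[K] K₂)
        ((aeval ![X 0, X 1 * X 2] : K₂ →ₐ[K] R) g)
        = aeval ![X 0, X 1] g := by
      apply comp_aeval_eq
      intro i; fin_cases i <;> simp
    have h3 : (![X 0, X 1] : Fin 2 → K₂) = X := by
      funext i; fin_cases i <;> rfl
    rw [← h1, hg12, h2, h3, aeval_X_left_apply]
  -- the one-variable polynomial h
  set h : Polynomial K := aeval ![Polynomial.X, (1 : Polynomial K)] g with hhdef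
  have hgen : ∀ r₁ r₂ : R, (aeval ![r₁, r₂] : K₂ →ₐ[K] R) g = Polynomial.aeval (r₁ * r₂) h := by
    intro r₁ r₂
    have h1 : (aeval ![r₁, r₂] : K₂ →ₐ[K] R) (aeval ![X 0 * X 1, (1 : K₂)] g)
        = aeval ![r₁ * r₂, (1 : R)] g := by
      apply comp_aeval_eq
      intro i; fin_cases i <;> simp
    have h2 : (Polynomial.aeval (r₁ * r₂) : Polynomial K →ₐ[K] R)
        (aeval ![Polynomial.X, (1 : Polynomial K)] g) = aeval ![r₁ * r₂, (1 : R)] g := by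
      apply comp_aeval_eq
      intro i; fin_cases i <;> simp
    rw [← hKEY, h1, hhdef, ← h2]
  -- h is constant
  have hhc : h = Polynomial.C (constantCoeff p) := by
    have e1 : Polynomial.aeval ((X 2 : R) ^ 4) h = algebraMap K R (constantCoeff p) := by
      rw [← hE3, hgen]
      congr 2
      ring
    have e2 : Polynomial.aeval ((Polynomial.X : Polynomial K) ^ 4) h
        = Polynomial.C (constantCoeff p) := by
      have := congrArg (aeval ![0, 0, Polynomial.X, 0] : R →ₐ[K] Polynomial K) e1
      rw [← Polynomial.aeval_algHom_apply, AlgHom.commutes] at this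
      simpa [Polynomial.algebraMap_eq] using this
    have e3 : Polynomial.expand K 4 h = Polynomial.expand K 4 (Polynomial.C (constantCoeff p)) := by
      rw [Polynomial.expand_C, ← e2, Polynomial.aeval_def, Polynomial.algebraMap_eq,
        ← Polynomial.coe_expand]
    exact Polynomial.expand_injective (by norm_num) e3
  -- finish
  refine ⟨constantCoeff p, ?_⟩
  rw [← hfg, hgen, hhc, Polynomial.aeval_C]
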